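/- Let (R, m, k) be a one-dimensional Cohen–Macaulay local ring with infinite residue field and minimal multiplicity, and let y be a minimal reduction of m (so m² = y·m). Then: (a) if M is a finitely generated torsion-free R-module with no nonzero free direct summand, then M^* = Hom_R(M, R) is Ulrich, i.e., m·M^* = y·M^*; (b) if I is a nonprincipal ideal of R and x ∈ I is a nonzerodivisor, then (x : I) is Ulrich; (c) if I is a nonprincipal ideal of R containing a nonzerodivisor, then tr_R(I) is Ulrich. -/

import Mathlib

open IsLocalRing

universe u

/-- The trace ideal of an `R`-module `M`: the ideal of `R` generated by all values `f(m)`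
for `f ∈ Hom_R(M, R)` and `m ∈ M`. -/
def traceIdeal (R : Type*) (M : Type*) [CommRing R] [AddCommGroup M] [Module R M] : Ideal R :=
  Ideal.span {r : R | ∃ (f : M →ₗ[R] R) (m : M), f m = r}

/-- `M` is a torsion-free `R`-module: nonzerodivisors of `R` act injectively on `M`. -/
def TorsionFreeMod (R : Type*) (M : Type*) [CommRing R] [AddCommGroup M] [Module R M] : Prop :=
  ∀ r ∈ nonZeroDivisors R, ∀ x : M, r • x = 0 → x = 0

/-- `M` has a nonzero free direct summand iff `R` is a direct summand of `M`, i.e. there is a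
split injection `R → M`. -/
def HasFreeSummand (R : Type u) (M : Type u) [CommRing R]
    [AddCommGroup M] [Module R M] : Prop :=
  ∃ (f : R →ₗ[R] M) (g : M →ₗ[R] R), g ∘ₗ f = LinearMap.id

section Aux

variable {R : Type u} [CommRing R]

lemma cancel_nzd {x a b : R} (hx : x ∈ nonZeroDivisors R) (h : x * a = x * b) : a = b := by
  have h' : (a - b) * x = 0 := by linear_combination h
  exact sub_eq_zero.mp ((mem_nonZeroDivisors_iff.mp hx).2 (a - b) h')

/-- Divide a linear map with values divisible by a nonzerodivisor. -/
lemma exists_div {M : Type*} [AddCommGroup M] [Module R M] {x : R}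
    (hx : x ∈ nonZeroDivisors R) (f : M →ₗ[R] R) (h : ∀ u, x ∣ f u) :
    ∃ g : M →ₗ[R] R, ∀ u, f u = x * g u := by
  choose s hs using h
  refine ⟨⟨⟨s, fun a b => ?_⟩, fun r a => ?_⟩, hs⟩
  · apply cancel_nzd hx
    rw [mul_add, ← hs, ← hs, ← hs, map_add]
  · simp only [RingHom.id_apply, smul_eq_mul]
    apply cancel_nzd hx
    have : f (r • a) = r * f a := by rw [map_smul, smul_eq_mul]
    rw [← hs, this, hs a]; ring

lemma swap_coe_smul {I : Ideal R} (u v : ↥I) : (↑u : R) • v = (↑v : R) • u := by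
  ext
  simp [mul_comm]

lemma swap_apply {I : Ideal R} (f : ↥I →ₗ[R] R) (u v : ↥I) :
    (↑u : R) * f v = (↑v : R) * f u := by
  rw [← smul_eq_mul, ← smul_eq_mul, ← map_smul, ← map_smul, swap_coe_smul]

/-- Any functional on a nonprincipal ideal takes values in the maximal ideal. -/
lemma ideal_hom_mem_max [IsLocalRing R] {I : Ideal R}
    (hnp : ¬ ∃ z : R, I = Ideal.span {z}) (f : ↥I →ₗ[R] R) (u : ↥I) :
    f u ∈ maximalIdeal R := by
  by_contra h
  have hu : IsUnit (f u) := by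
    simpa [IsLocalRing.mem_maximalIdeal, mem_nonunits_iff, not_not] using h
  apply hnp
  refine ⟨(u : R), le_antisymm ?_ ?_⟩
  · intro b hb
    rw [Ideal.mem_span_singleton]
    refine ⟨(↑hu.unit⁻¹ : R) * f ⟨b, hb⟩, ?_⟩
    have key : (↑u : R) * f ⟨b, hb⟩ = b * f u := swap_apply f u ⟨b, hb⟩
    have h1 : (↑hu.unit⁻¹ : R) * f u = 1 := hu.val_inv_mul
    linear_combination (-(↑hu.unit⁻¹ : R)) * key - b * h1
  · rw [Ideal.span_le, Set.singleton_subset_iff]; exact u.2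

/-- Any functional on a module with no free summand takes values in the maximal ideal. -/
lemma module_hom_mem_max [IsLocalRing R] {M : Type u} [AddCommGroup M] [Module R M]
    (hnf : ¬ HasFreeSummand R M) (f : M →ₗ[R] R) (u : M) :
    f u ∈ maximalIdeal R := by
  by_contra h
  have hu : IsUnit (f u) := by
    simpa [IsLocalRing.mem_maximalIdeal, mem_nonunits_iff, not_not] using h
  apply hnf
  refine ⟨LinearMap.toSpanSingleton R M ((↑hu.unit⁻¹ : R) • u), f, ?_⟩
  ext r
  have h1 : (↑hu.unit⁻¹ : R) * f u = 1 := hu.val_inv_mul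
  simp [LinearMap.toSpanSingleton_apply, map_smul, smul_eq_mul, mul_assoc, h1]

/-- Ideal cancellation by a nonzerodivisor. -/
lemma span_mul_cancel {x : R} (hx : x ∈ nonZeroDivisors R) {A B : Ideal R}
    (h : Ideal.span {x} * A = Ideal.span {x} * B) : A = B := by
  have half : ∀ {A B : Ideal R}, Ideal.span {x} * A = Ideal.span {x} * B → A ≤ B := by
    intro A B h a ha
    have : x * a ∈ Ideal.span {x} * B := by
      rw [← h]; exact Ideal.mul_mem_mul (Ideal.mem_span_singleton_self x) ha
    obtain ⟨b, hb, hxb⟩ := Ideal.mem_span_singleton_mul.mp this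
    rwa [← cancel_nzd hx hxb]
  exact le_antisymm (half h) (half h.symm)

/-- Representation of elements of a colon ideal as "division" functionals. -/
lemma colon_rep [IsLocalRing R] {I : Ideal R} (hnp : ¬ ∃ z : R, I = Ideal.span {z})
    {x : R} (hxI : x ∈ I) (hx : x ∈ nonZeroDivisors R) {w : R}
    (hw : w ∈ (Ideal.span {x}).colon I) :
    ∃ g : ↥I →ₗ[R] R, (∀ b, g b ∈ maximalIdeal R) ∧ (∀ b : ↥I, w * ↑b = x * g b) ∧
      w ∈ maximalIdeal R := by
  have hdvd : ∀ u : ↥I, x ∣ (w • (Submodule.subtype I)) u := by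
    intro u
    rw [← Ideal.mem_span_singleton]
    have := Submodule.mem_colon.mp hw ↑u u.2
    simpa [smul_eq_mul] using this
  obtain ⟨g, hg⟩ := exists_div hx _ hdvd
  have hg' : ∀ u : ↥I, w * ↑u = x * g u := by
    intro u
    have := hg u
    simpa [smul_eq_mul] using this
  have hm : ∀ b, g b ∈ maximalIdeal R := ideal_hom_mem_max hnp g
  refine ⟨g, hm, hg', ?_⟩
  have h2 := hg' ⟨x, hxI⟩
  have : w = g ⟨x, hxI⟩ := cancel_nzd hx (by linear_combination h2)
  rw [this]; exact hm _

end Aux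

/-- Let `(R, m, k)` be a one-dimensional Cohen–Macaulay local ring with
infinite residue field and minimal multiplicity, and let `y` be a minimal reduction of `m`
(so `m² = y·m`).  Then:
(a) if `M` is a finitely generated torsion-free `R`-module with no nonzero free direct summand,
    then `M^* = Hom_R(M, R)` is Ulrich, i.e. `m·M^* = y·M^*`;
(b) if `I` is a nonprincipal ideal of `R` and `x ∈ I` is a nonzerodivisor, then `(x : I)` is
    Ulrich;
(c) if `I` is a nonprincipal ideal of `R` containing a nonzerodivisor, then `tr_R(I)` is
    Ulrich. -/
theorem ulrich_constructions {R : Type u} [CommRing R] [IsNoetherianRing R] [IsLocalRing R]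
    (hdim : ringKrullDim R = 1)
    (hCM : ∃ r ∈ maximalIdeal R, r ∈ nonZeroDivisors R)
    (hres : Infinite (ResidueField R))
    (y : R) (hy : y ∈ maximalIdeal R)
    (hminmult : (maximalIdeal R) ^ 2 = Ideal.span {y} * maximalIdeal R) :
    (∀ (M : Type u) [AddCommGroup M] [Module R M], Module.Finite R M →
      TorsionFreeMod R M → ¬ HasFreeSummand R M →
      (maximalIdeal R) • (⊤ : Submodule R (M →ₗ[R] R)) =
        (Ideal.span {y}) • (⊤ : Submodule R (M →ₗ[R] R)))
    ∧ (∀ I : Ideal R, (¬ ∃ z : R, I = Ideal.span {z}) →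
        ∀ x ∈ I, x ∈ nonZeroDivisors R →
          maximalIdeal R * ((Ideal.span {x}).colon I) =
            Ideal.span {y} * ((Ideal.span {x}).colon I))
    ∧ (∀ I : Ideal R, (¬ ∃ z : R, I = Ideal.span {z}) →
        (∃ x ∈ I, x ∈ nonZeroDivisors R) →
          maximalIdeal R * traceIdeal R ↥I = Ideal.span {y} * traceIdeal R ↥I) := by
  -- `y` is a nonzerodivisor
  have hynzd : y ∈ nonZeroDivisors R := by
    obtain ⟨r, hrm, hr⟩ := hCM
    have h2 : r * r ∈ Ideal.span {y} * maximalIdeal R := by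
      rw [← hminmult, pow_two]; exact Ideal.mul_mem_mul hrm hrm
    obtain ⟨c, _, hyc⟩ := Ideal.mem_span_singleton_mul.mp h2
    rw [mem_nonZeroDivisors_iff_right]
    intro t ht
    have hrr : r * r ∈ nonZeroDivisors R := mul_mem hr hr
    refine (mem_nonZeroDivisors_iff.mp hrr).2 t ?_
    calc t * (r * r) = (t * y) * c := by rw [← hyc]; ring
      _ = 0 := by rw [ht, zero_mul]
  -- products of two maximal-ideal elements are divisible by `y` with quotient (existence)
  have ydvd : ∀ a b : R, a ∈ maximalIdeal R → b ∈ maximalIdeal R → ∃ c, a * b = y * c := by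
    intro a b ha hb
    have : a * b ∈ Ideal.span {y} * maximalIdeal R := by
      rw [← hminmult, pow_two]; exact Ideal.mul_mem_mul ha hb
    obtain ⟨c, _, hc⟩ := Ideal.mem_span_singleton_mul.mp this
    exact ⟨c, hc.symm⟩
  have hyle : Ideal.span {y} ≤ maximalIdeal R := by
    rw [Ideal.span_le, Set.singleton_subset_iff]; exact hy
  -- Part (b), proved first so it can be used in (c)
  have partb : ∀ I : Ideal R, (¬ ∃ z : R, I = Ideal.span {z}) →
      ∀ x ∈ I, x ∈ nonZeroDivisors R →
        maximalIdeal R * ((Ideal.span {x}).colon I) =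
          Ideal.span {y} * ((Ideal.span {x}).colon I) := by
    intro I hnp x hxI hx
    apply le_antisymm
    · rw [Ideal.mul_le]
      intro z hz w hw
      obtain ⟨g, hgm, hgeq, hwm⟩ := colon_rep hnp hxI hx hw
      obtain ⟨c, hc⟩ := ydvd z w hz hwm
      have hcJ : c ∈ (Ideal.span {x}).colon I := by
        rw [Submodule.mem_colon]
        intro p hp
        obtain ⟨d, hd⟩ := ydvd z (g ⟨p, hp⟩) hz (hgm ⟨p, hp⟩)
        rw [smul_eq_mul, Ideal.mem_span_singleton]
        refine ⟨d, cancel_nzd hynzd ?_⟩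
        have h3 := hgeq ⟨p, hp⟩
        -- y * (c*p) = y * (x*d)
        linear_combination (-p) * hc + z * h3 + x * hd
      rw [hc]
      exact Ideal.mul_mem_mul (Ideal.mem_span_singleton_self y) hcJ
    · exact Ideal.mul_mono_left hyle
  refine ⟨?_, partb, ?_⟩
  -- Part (a)
  · intro M _ _ _ _ hnf
    apply le_antisymm
    · rw [Submodule.smul_le]
      intro z hz f _
      have hdvd : ∀ u, y ∣ (z • f) u := by
        intro u
        obtain ⟨c, hc⟩ := ydvd z (f u) hz (module_hom_mem_max hnf f u)
        exact ⟨c, by simpa [smul_eq_mul] using hc⟩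
      obtain ⟨g, hg⟩ := exists_div hynzd (z • f) hdvd
      have : z • f = y • g := by
        ext u
        simpa [smul_eq_mul] using hg u
      rw [this]
      exact Submodule.smul_mem_smul (Ideal.mem_span_singleton_self y) trivial
    · exact Submodule.smul_mono_left hyle
  -- Part (c)
  · rintro I hnp ⟨x, hxI, hx⟩
    set J := (Ideal.span {x}).colon I with hJ
    set T := traceIdeal R ↥I with hT
    have key : Ideal.span {x} * T = J * I := by
      apply le_antisymm
      · -- each generator f b of T satisfies x * f b ∈ J * I
        have hgen : T ≤ (J * I).colon (Ideal.span {x}) := by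
          rw [hT, traceIdeal, Ideal.span_le]
          rintro _ ⟨f, b, rfl⟩
          rw [SetLike.mem_coe, Submodule.mem_colon]
          intro p hp
          rw [SetLike.mem_coe, Ideal.mem_span_singleton] at hp
          obtain ⟨r, rfl⟩ := hp
          have hfxJ : f ⟨x, hxI⟩ ∈ J := by
            rw [hJ, Submodule.mem_colon]
            intro q hq
            rw [smul_eq_mul, Ideal.mem_span_singleton]
            have hsw : x * f ⟨q, hq⟩ = q * f ⟨x, hxI⟩ := swap_apply f ⟨x, hxI⟩ ⟨q, hq⟩
            exact ⟨f ⟨q, hq⟩, by linear_combination -hsw⟩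
          have hxfb : x * f b = f ⟨x, hxI⟩ * (b : R) := by
            have hsw : x * f b = (b : R) * f ⟨x, hxI⟩ := swap_apply f ⟨x, hxI⟩ b
            linear_combination hsw
          have : f b • (x * r) = r * (x * f b) := by rw [smul_eq_mul]; ring
          rw [this, hxfb]
          exact Ideal.mul_mem_left _ r (Ideal.mul_mem_mul hfxJ b.2)
        rw [Ideal.mul_le]
        intro a ha t ht
        have := Submodule.mem_colon.mp (hgen ht) a ha
        simpa [smul_eq_mul, mul_comm] using this
      · rw [Ideal.mul_le]
        intro w hw b hb
        obtain ⟨g, _, hgeq, _⟩ := colon_rep hnp hxI hx hw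
        rw [hgeq ⟨b, hb⟩]
        refine Ideal.mul_mem_mul (Ideal.mem_span_singleton_self x) ?_
        exact Ideal.subset_span ⟨g, ⟨b, hb⟩, rfl⟩
    have hbI := partb I hnp x hxI hx
    apply span_mul_cancel hx
    calc Ideal.span {x} * (maximalIdeal R * T)
        = maximalIdeal R * (Ideal.span {x} * T) := by ring
      _ = (maximalIdeal R * J) * I := by rw [key]; ring
      _ = (Ideal.span {y} * J) * I := by rw [hbI]
      _ = Ideal.span {y} * (Ideal.span {x} * T) := by rw [mul_assoc, ← key]
      _ = Ideal.span {x} * (Ideal.span {y} * T) := by ring
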